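/- arXiv:1112.1125 — 3 statements merged into one kernel-verified Lean document; each statement's English description precedes it below -/
import Mathlib

section
/- (Theorem 1.) Let A and S be nonempty finite sets. Let μ be a probability measure on the space of CMC kernels (A × S) → Δ(S), and let T̂ be its componentwise barycenter, T̂_{a,s}(s') = ∫ Θ_{a,s}(s') dμ(Θ); assume every T̂_{a,s} is strictly positive. Then for every CMC kernel Φ all of whose transition distributions Φ_{a,s} are strictly positive, ∫ (I_M(Θ‖Φ) − I_M(Θ‖T̂)) dμ(Θ) = ∑_{a∈A, s∈S} D_KL(T̂_{a,s}‖Φ_{a,s}) ≥ 0. Consequently the Bayesian estimate T̂ minimizes the expected missing information E_{Θ∼μ}[I_M(Θ‖Φ)] over all strictly positive kernels Φ. -/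
open MeasureTheory

/-- Gibbs' inequality. -/
lemma gibbs_log {ι : Type*} [Fintype ι] (p q : ι → ℝ)
    (hp0 : ∀ i, 0 ≤ p i) (hp1 : ∑ i, p i = 1)
    (hq0 : ∀ i, 0 < q i) (hq1 : ∑ i, q i = 1) :
    0 ≤ ∑ i, p i * Real.log (p i / q i) := by
  have key : ∑ i, p i * Real.log (q i / p i) ≤ 0 := by
    calc ∑ i, p i * Real.log (q i / p i) ≤ ∑ i, (q i - p i) := by
          apply Finset.sum_le_sum
          intro i _
          rcases eq_or_lt_of_le (hp0 i) with h | h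
          · simp [← h, (hq0 i).le]
          · have hpos : 0 < q i / p i := div_pos (hq0 i) h
            calc p i * Real.log (q i / p i) ≤ p i * (q i / p i - 1) := by
                  exact mul_le_mul_of_nonneg_left (Real.log_le_sub_one_of_pos hpos) h.le
              _ = q i - p i := by field_simp
      _ = 0 := by rw [Finset.sum_sub_distrib, hp1, hq1, sub_self]
  have : ∑ i, p i * Real.log (p i / q i) = -∑ i, p i * Real.log (q i / p i) := by
    rw [← Finset.sum_neg_distrib]
    apply Finset.sum_congr rfl
    intro i _
    rcases eq_or_lt_of_le (hp0 i) with h | h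
    · simp [← h]
    · rw [Real.log_div h.ne' (hq0 i).ne', Real.log_div (hq0 i).ne' h.ne']; ring
  rw [this]
  linarith

/-- **Theorem 1 of the paper.** Let `A`, `S` be nonempty finite
sets and `μ` a probability measure on CMC kernels `(A × S) → Δ(S)` (supported
on kernels all of whose transition distributions are probability vectors),
with componentwise barycenter `T̂ (a,s) s' = ∫ Θ, Θ (a,s) s' ∂μ`, every
`T̂ (a,s)` strictly positive.  Then for every kernel `Φ` with all transition
distributions strictly positive probability vectors,
`∫ (I_M(Θ‖Φ) − I_M(Θ‖T̂)) dμ = ∑_{a,s} D_KL(T̂_{a,s}‖Φ_{a,s}) ≥ 0`,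
so the Bayesian estimate `T̂` minimizes the expected missing information. -/
theorem bayes_kernel_minimizes_expected_missing_information
    {A S : Type*} [Fintype A] [Nonempty A] [Fintype S] [Nonempty S]
    (μ : Measure (A × S → S → ℝ)) [IsProbabilityMeasure μ]
    (hsupp : ∀ᵐ Θ ∂μ, ∀ as : A × S, (∀ s', 0 ≤ Θ as s') ∧ ∑ s', Θ as s' = 1)
    (That : A × S → S → ℝ)
    (hThat : ∀ (as : A × S) (s' : S), That as s' = ∫ Θ, Θ as s' ∂μ)
    (hThat_pos : ∀ (as : A × S) (s' : S), 0 < That as s')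
    (Φ : A × S → S → ℝ)
    (hΦ0 : ∀ (as : A × S) (s' : S), 0 < Φ as s')
    (hΦ1 : ∀ as : A × S, ∑ s', Φ as s' = 1) :
    (∫ Θ, ((∑ as : A × S, ∑ s', Θ as s' * Real.logb 2 (Θ as s' / Φ as s'))
         - (∑ as : A × S, ∑ s', Θ as s' * Real.logb 2 (Θ as s' / That as s'))) ∂μ)
      = ∑ as : A × S, ∑ s', That as s' * Real.logb 2 (That as s' / Φ as s')
    ∧ 0 ≤ ∑ as : A × S, ∑ s', That as s' * Real.logb 2 (That as s' / Φ as s') := by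
  classical
  -- measurability and integrability of evaluations
  have hmeas : ∀ (as : A × S) (s' : S),
      Measurable (fun Θ : A × S → S → ℝ => Θ as s') :=
    fun as s' => (measurable_pi_apply s').comp (measurable_pi_apply as)
  have hint : ∀ (as : A × S) (s' : S),
      Integrable (fun Θ : A × S → S → ℝ => Θ as s') μ := by
    intro as s'
    apply (integrable_const (1 : ℝ)).mono' (hmeas as s').aestronglyMeasurable
    filter_upwards [hsupp] with Θ hΘ
    rcases hΘ as with ⟨h0, h1⟩
    rw [Real.norm_eq_abs, abs_of_nonneg (h0 s')]
    calc Θ as s' ≤ ∑ t, Θ as t := Finset.single_le_sum (fun t _ => h0 t) (Finset.mem_univ s')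
      _ = 1 := h1
  -- the integrand equals a.e. the linear function
  have hcongr : ∀ᵐ Θ ∂μ,
      ((∑ as : A × S, ∑ s', Θ as s' * Real.logb 2 (Θ as s' / Φ as s'))
        - (∑ as : A × S, ∑ s', Θ as s' * Real.logb 2 (Θ as s' / That as s')))
      = ∑ as : A × S, ∑ s', Θ as s' * Real.logb 2 (That as s' / Φ as s') := by
    filter_upwards [hsupp] with Θ hΘ
    rw [← Finset.sum_sub_distrib]
    apply Finset.sum_congr rfl
    intro as _
    rw [← Finset.sum_sub_distrib]
    apply Finset.sum_congr rfl
    intro s' _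
    rcases eq_or_lt_of_le ((hΘ as).1 s') with h | h
    · simp [← h]
    · rw [← mul_sub]
      congr 1
      unfold Real.logb
      rw [Real.log_div h.ne' (hΦ0 as s').ne', Real.log_div h.ne' (hThat_pos as s').ne',
        Real.log_div (hThat_pos as s').ne' (hΦ0 as s').ne']
      ring
  have hintegral :
      (∫ Θ, ((∑ as : A × S, ∑ s', Θ as s' * Real.logb 2 (Θ as s' / Φ as s'))
         - (∑ as : A × S, ∑ s', Θ as s' * Real.logb 2 (Θ as s' / That as s'))) ∂μ)
      = ∑ as : A × S, ∑ s', That as s' * Real.logb 2 (That as s' / Φ as s') := by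
    rw [integral_congr_ae hcongr]
    rw [integral_finset_sum _ (fun as _ => integrable_finset_sum _
      (fun s' _ => (hint as s').mul_const _))]
    apply Finset.sum_congr rfl
    intro as _
    rw [integral_finset_sum _ (fun s' _ => (hint as s').mul_const _)]
    apply Finset.sum_congr rfl
    intro s' _
    rw [integral_mul_const, ← hThat]
  refine ⟨hintegral, ?_⟩
  -- That is a probability vector
  have hThat1 : ∀ as : A × S, ∑ s', That as s' = 1 := by
    intro as
    have : ∑ s', That as s' = ∫ Θ, (∑ s', Θ as s') ∂μ := by
      rw [integral_finset_sum _ (fun s' _ => hint as s')]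
      exact Finset.sum_congr rfl fun s' _ => hThat as s'
    rw [this]
    have : ∫ Θ, (∑ s', Θ as s') ∂μ = ∫ _, (1 : ℝ) ∂μ := by
      apply integral_congr_ae
      filter_upwards [hsupp] with Θ hΘ using (hΘ as).2
    rw [this, integral_const]
    simp
  apply Finset.sum_nonneg
  intro as _
  have := gibbs_log (That as) (Φ as) (fun s' => (hThat_pos as s').le) (hThat1 as)
    (hΦ0 as) (hΦ1 as)
  have hlog2 : 0 < Real.log 2 := Real.log_pos one_lt_two
  calc (0:ℝ) = (∑ s', That as s' * Real.log (That as s' / Φ as s')) / Real.log 2 * 0 := by ring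
    _ ≤ ∑ s', That as s' * Real.logb 2 (That as s' / Φ as s') := by
        rw [mul_zero]
        have : ∑ s', That as s' * Real.logb 2 (That as s' / Φ as s')
            = (∑ s', That as s' * Real.log (That as s' / Φ as s')) / Real.log 2 := by
          rw [Finset.sum_div]
          exact Finset.sum_congr rfl fun s' _ => by unfold Real.logb; ring
        rw [this]
        positivity
end

section
/- (Theorem 2.) Let S be a nonempty finite set and let μ be a probability measure on the simplex Δ(S) (the posterior over the unknown transition distribution, given past data) whose barycenter p̂ is strictly positive. For each s* ∈ S define the updated model p̂^{s*}(s') = (∫_{Δ(S)} θ(s*)·θ(s') dμ(θ)) / p̂(s*), and assume each p̂^{s*} is strictly positive. Then the expected information gain of sampling one outcome — where the true distribution θ is drawn from μ and the outcome s* is drawn from θ, and the realized information gain is I_G(s*, θ) = ∑_{s'∈S} θ(s')·log₂(p̂^{s*}(s')/p̂(s')) — equals the predicted information gain PIG computable from the models alone: ∫_{Δ(S)} ∑_{s*∈S} θ(s*)·(∑_{s'∈S} θ(s')·log₂(p̂^{s*}(s')/p̂(s'))) dμ(θ) = ∑_{s*∈S} p̂(s*)·(∑_{s'∈S} p̂^{s*}(s')·log₂(p̂^{s*}(s')/p̂(s'))).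 -/
open MeasureTheory

/-- **Theorem 2 of the paper.** Let `μ` be a probability measure
supported on the simplex `Δ(S)` (the posterior over the unknown transition
distribution) whose barycenter `p̂` is strictly positive, and for each
`s* ∈ S` let `p̂^{s*} s' = (∫ θ, θ s* · θ s' ∂μ) / p̂ s*` be the updated model,
assumed strictly positive.  Then the expected information gain — with `θ ∼ μ`,
outcome `s* ∼ θ`, and realized gain `∑ s', θ s' · log₂ (p̂^{s*} s' / p̂ s')` —
equals the predicted information gain computable from the models alone:
`∫ ∑ s*, θ s* · (∑ s', θ s' · log₂ (p̂^{s*} s' / p̂ s')) dμ(θ)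
   = ∑ s*, p̂ s* · (∑ s', p̂^{s*} s' · log₂ (p̂^{s*} s' / p̂ s'))`. -/
theorem expected_information_gain_eq_PIG
    {S : Type*} [Fintype S] [Nonempty S]
    (μ : Measure (S → ℝ)) [IsProbabilityMeasure μ]
    (hsupp : ∀ᵐ θ ∂μ, (∀ s, 0 ≤ θ s) ∧ ∑ s, θ s = 1)
    (phat : S → ℝ) (hphat : ∀ s, phat s = ∫ θ, θ s ∂μ)
    (hphat_pos : ∀ s, 0 < phat s)
    (phats : S → S → ℝ)
    (hphats : ∀ sstar s' : S, phats sstar s' = (∫ θ, θ sstar * θ s' ∂μ) / phat sstar)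
    (hphats_pos : ∀ sstar s' : S, 0 < phats sstar s') :
    (∫ θ, ∑ sstar, θ sstar *
        (∑ s', θ s' * Real.logb 2 (phats sstar s' / phat s')) ∂μ)
      = ∑ sstar, phat sstar *
          (∑ s', phats sstar s' * Real.logb 2 (phats sstar s' / phat s')) := by
  classical
  set c : S → S → ℝ := fun sstar s' => Real.logb 2 (phats sstar s' / phat s') with hc
  -- integrability of θ ↦ θ a * θ b
  have hbound : ∀ a b : S, ∀ᵐ θ ∂μ, ‖θ a * θ b‖ ≤ 1 := by
    intro a b
    filter_upwards [hsupp] with θ hθ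
    obtain ⟨hnn, hsum⟩ := hθ
    have hle : ∀ s : S, θ s ≤ 1 := by
      intro s
      calc θ s ≤ ∑ t, θ t := Finset.single_le_sum (fun t _ => hnn t) (Finset.mem_univ s)
        _ = 1 := hsum
    have : θ a * θ b ≤ 1 * 1 := mul_le_mul (hle a) (hle b) (hnn b) zero_le_one
    rw [Real.norm_eq_abs, abs_of_nonneg (mul_nonneg (hnn a) (hnn b))]
    linarith
  have hint : ∀ a b : S, Integrable (fun θ : S → ℝ => θ a * θ b) μ := by
    intro a b
    exact Integrable.mono' (integrable_const 1)
      ((measurable_pi_apply a).mul (measurable_pi_apply b)).aestronglyMeasurable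
      (hbound a b)
  have hint2 : ∀ a b : S, Integrable (fun θ : S → ℝ => θ a * θ b * c a b) μ :=
    fun a b => (hint a b).mul_const _
  have hintsum : ∀ a : S,
      Integrable (fun θ : S → ℝ => ∑ b, θ a * θ b * c a b) μ := by
    intro a
    exact integrable_finset_sum _ (fun b _ => hint2 a b)
  calc (∫ θ, ∑ sstar, θ sstar * (∑ s', θ s' * c sstar s') ∂μ)
      = ∫ θ, ∑ sstar, ∑ s', θ sstar * θ s' * c sstar s' ∂μ := by
        congr 1; funext θ
        refine Finset.sum_congr rfl (fun a _ => ?_)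
        rw [Finset.mul_sum]
        exact Finset.sum_congr rfl (fun b _ => by ring)
    _ = ∑ sstar, ∑ s', ∫ θ, θ sstar * θ s' * c sstar s' ∂μ := by
        rw [integral_finset_sum _ (fun a _ => hintsum a)]
        exact Finset.sum_congr rfl (fun a _ => integral_finset_sum _ (fun b _ => hint2 a b))
    _ = ∑ sstar, ∑ s', (∫ θ, θ sstar * θ s' ∂μ) * c sstar s' := by
        refine Finset.sum_congr rfl (fun a _ => Finset.sum_congr rfl (fun b _ => ?_))
        exact integral_mul_const _ _
    _ = ∑ sstar, phat sstar * (∑ s', phats sstar s' * c sstar s') := by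
        refine Finset.sum_congr rfl (fun a _ => ?_)
        rw [Finset.mul_sum]
        refine Finset.sum_congr rfl (fun b _ => ?_)
        rw [hphats a b]
        field_simp [(hphat_pos a).ne']
end

section
/- Let S be a nonempty finite set and let μ be a probability measure on the simplex Δ(S) whose barycenter p̂ is strictly positive. For each s* ∈ S define p̂^{s*}(s') = (∫_{Δ(S)} θ(s*)·θ(s') dμ(θ)) / p̂(s*), and assume each p̂^{s*} is strictly positive. Then the predicted information gain is bounded by the entropy of the current model: ∑_{s*∈S} p̂(s*)·(∑_{s'∈S} p̂^{s*}(s')·log₂(p̂^{s*}(s')/p̂(s'))) ≤ −∑_{s∈S} p̂(s)·log₂ p̂(s). -/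
open MeasureTheory

/-- Let `μ` be a probability measure supported on the simplex
`Δ(S)` with strictly positive barycenter `p̂`, and for each `s* ∈ S` let
`p̂^{s*} s' = (∫ θ, θ s* · θ s' ∂μ) / p̂ s*`, assumed strictly positive.  Then
the predicted information gain is bounded by the entropy of the current model:
`∑ s*, p̂ s* · (∑ s', p̂^{s*} s' · log₂ (p̂^{s*} s' / p̂ s'))
   ≤ −∑ s, p̂ s · log₂ (p̂ s)`. -/
theorem PIG_le_entropy
    {S : Type*} [Fintype S] [Nonempty S]
    (μ : Measure (S → ℝ)) [IsProbabilityMeasure μ]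
    (hsupp : ∀ᵐ θ ∂μ, (∀ s, 0 ≤ θ s) ∧ ∑ s, θ s = 1)
    (phat : S → ℝ) (hphat : ∀ s, phat s = ∫ θ, θ s ∂μ)
    (hphat_pos : ∀ s, 0 < phat s)
    (phats : S → S → ℝ)
    (hphats : ∀ sstar s' : S, phats sstar s' = (∫ θ, θ sstar * θ s' ∂μ) / phat sstar)
    (hphats_pos : ∀ sstar s' : S, 0 < phats sstar s') :
    (∑ sstar, phat sstar *
        (∑ s', phats sstar s' * Real.logb 2 (phats sstar s' / phat s')))
      ≤ -∑ s, phat s * Real.logb 2 (phat s) := by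
  have hne : ∀ s, phat s ≠ 0 := fun s => (hphat_pos s).ne'
  -- joint integral equals phat a * phats a b
  have hj : ∀ a b, (∫ θ, θ a * θ b ∂μ) = phat a * phats a b := by
    intro a b
    rw [hphats a b, mul_comm, div_mul_cancel₀ _ (hne a)]
  -- integrability of the products, from the integral being nonzero
  have hint : ∀ a b, Integrable (fun θ => θ a * θ b) μ := by
    intro a b
    by_contra h
    have h0 := integral_undef h
    rw [hj a b] at h0
    exact absurd h0 (mul_pos (hphat_pos a) (hphats_pos a b)).ne'
  -- row sums: ∑ b, phat a * phats a b = phat a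
  have hsum_right : ∀ a, ∑ b, phat a * phats a b = phat a := by
    intro a
    have h1 : ∑ b, ∫ θ, θ a * θ b ∂μ = ∫ θ, θ a ∂μ := by
      rw [← integral_finset_sum _ (fun b _ => hint a b)]
      apply integral_congr_ae
      filter_upwards [hsupp] with θ hθ
      rw [← Finset.mul_sum, hθ.2, mul_one]
    simp_rw [hj] at h1
    rw [h1, ← hphat]
  -- column sums: ∑ a, phat a * phats a b = phat b
  have hsum_left : ∀ b, ∑ a, phat a * phats a b = phat b := by
    intro b
    have h1 : ∑ a, ∫ θ, θ a * θ b ∂μ = ∫ θ, θ b ∂μ := by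
      rw [← integral_finset_sum _ (fun a _ => hint a b)]
      apply integral_congr_ae
      filter_upwards [hsupp] with θ hθ
      rw [← Finset.sum_mul, hθ.2, one_mul]
    simp_rw [hj] at h1
    rw [h1, ← hphat]
  -- each phats a b ≤ 1
  have hle1 : ∀ a b, phats a b ≤ 1 := by
    intro a b
    have hs1 : ∑ b', phats a b' = 1 := by
      have := hsum_right a
      rw [← Finset.mul_sum] at this
      exact mul_left_cancel₀ (hne a) (by rw [this, mul_one])
    calc phats a b ≤ ∑ b', phats a b' :=
          Finset.single_le_sum (fun i _ => (hphats_pos a i).le) (Finset.mem_univ b)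
      _ = 1 := hs1
  -- split the log
  have key : ∀ a b, phats a b * Real.logb 2 (phats a b / phat b)
      = phats a b * Real.logb 2 (phats a b) - phats a b * Real.logb 2 (phat b) := by
    intro a b
    rw [Real.logb_div (hphats_pos a b).ne' (hne b), mul_sub]
  simp_rw [key, Finset.sum_sub_distrib, mul_sub, Finset.sum_sub_distrib]
  have term2 : ∑ a, phat a * ∑ b, phats a b * Real.logb 2 (phat b)
      = ∑ b, phat b * Real.logb 2 (phat b) := by
    simp_rw [Finset.mul_sum]
    rw [Finset.sum_comm]
    refine Finset.sum_congr rfl fun b _ => ?_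
    simp_rw [← mul_assoc]
    rw [← Finset.sum_mul, hsum_left]
  have term1 : ∑ a, phat a * ∑ b, phats a b * Real.logb 2 (phats a b) ≤ 0 := by
    apply Finset.sum_nonpos
    intro a _
    apply mul_nonpos_of_nonneg_of_nonpos (hphat_pos a).le
    apply Finset.sum_nonpos
    intro b _
    exact mul_nonpos_of_nonneg_of_nonpos (hphats_pos a b).le
      (Real.logb_nonpos one_lt_two (hphats_pos a b).le (hle1 a b))
  linarith [term1, term2]
end
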